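/- For all integers k, r, s ≥ 0 the identity Σ_{i=0}^{r} (−1)^i q^{i(i−1)/2 + (r−i)(r−i−1)/2 + (r+s+i)(r+s+i−1)/2} d_i · binom_q(i+s, s) · binom_q(k, r−i) · binom_q(k, r+s+i) = q^{r(r−1)/2 + (r+s)(r+s−1)/2} (q;q)_k / ((q;q)_{k−r−s} (q;q)_r (q;q)_s) holds as an identity of rational functions in the indeterminate q, where d_i := (1 − q^{2i+s})/(1 − q^{i+s}) for i + s > 0 and d_i := 1 when i = s = 0. -/

import Mathlib

noncomputable section

/-- `(q;q)_m = ∏_{i=0}^{m-1}(1 - q^{i+1})` as a rational function in `q`. -/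
def qfac (m : ℕ) : RatFunc ℚ :=
  ∏ i ∈ Finset.range m, (1 - RatFunc.X ^ (i + 1))

/-- `1/(q;q)_m` with the convention that it is `0` for `m < 0`. -/
def qfacInv (m : ℤ) : RatFunc ℚ :=
  if m < 0 then 0 else (qfac m.toNat)⁻¹

/-- The Gaussian binomial coefficient `[m choose j]_q` as a rational function in `q`,
equal to `(q;q)_m/((q;q)_j (q;q)_{m-j})` for `0 ≤ j ≤ m` and `0` otherwise. -/
def qbinom (m j : ℕ) : RatFunc ℚ :=
  if j ≤ m then qfac m / (qfac j * qfac (m - j)) else 0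

namespace LSAux

lemma one_sub_X_pow_ne_zero {n : ℕ} (hn : n ≠ 0) : (1 : RatFunc ℚ) - RatFunc.X ^ n ≠ 0 := by
  rw [sub_ne_zero]
  intro h1
  have h2 : (Polynomial.X : Polynomial ℚ) ^ n = 1 := by
    apply IsFractionRing.injective (Polynomial ℚ) (RatFunc ℚ)
    simp [map_pow, RatFunc.algebraMap_X, ← h1]
  have := congrArg Polynomial.natDegree h2
  simp [Polynomial.natDegree_X_pow] at this
  exact hn this

lemma qfac_zero : qfac 0 = 1 := by simp [qfac]

lemma qfac_succ (m : ℕ) : qfac (m + 1) = qfac m * (1 - RatFunc.X ^ (m + 1)) := by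
  simp [qfac, Finset.prod_range_succ]

lemma qfac_ne_zero (m : ℕ) : qfac m ≠ 0 := by
  induction m with
  | zero => simp [qfac_zero]
  | succ n ih =>
      rw [qfac_succ]
      exact mul_ne_zero ih (one_sub_X_pow_ne_zero (Nat.succ_ne_zero n))

lemma qbinom_of_le {m j : ℕ} (h : j ≤ m) :
    qbinom m j = qfac m / (qfac j * qfac (m - j)) := if_pos h

lemma qbinom_of_lt {m j : ℕ} (h : m < j) : qbinom m j = 0 := if_neg (by omega)

lemma qbinom_ne_zero {m j : ℕ} (h : j ≤ m) : qbinom m j ≠ 0 := by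
  rw [qbinom_of_le h]
  exact div_ne_zero (qfac_ne_zero m) (mul_ne_zero (qfac_ne_zero j) (qfac_ne_zero _))

/-- Lemma A : `(1-q^{n+1}) [n choose j] = (1-q^{n+1-j}) [n+1 choose j]`, valid for all n j. -/
lemma lemA (n j : ℕ) :
    (1 - RatFunc.X ^ (n + 1)) * qbinom n j
      = (1 - RatFunc.X ^ (n + 1 - j)) * qbinom (n + 1) j := by
  rcases le_or_gt j n with h | h
  · rw [qbinom_of_le h, qbinom_of_le (h.trans (Nat.le_succ n)), qfac_succ n,
      show n + 1 - j = (n - j) + 1 by omega, qfac_succ (n - j)]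
    have h1 := qfac_ne_zero j
    have h2 := qfac_ne_zero (n - j)
    have h3 : (1 : RatFunc ℚ) - RatFunc.X ^ (n - j + 1) ≠ 0 :=
      one_sub_X_pow_ne_zero (Nat.succ_ne_zero _)
    field_simp
  · rcases eq_or_lt_of_le (Nat.succ_le_of_lt h) with h' | h'
    · rw [qbinom_of_lt h, ← h', Nat.sub_self]
      simp
    · rw [qbinom_of_lt h, qbinom_of_lt h']
      simp

/-- Lemma B : `(1-q^{j+1}) [n choose j+1] = (1-q^{n-j}) [n choose j]`, valid for all n j. -/
lemma lemB (n j : ℕ) :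
    (1 - RatFunc.X ^ (j + 1)) * qbinom n (j + 1)
      = (1 - RatFunc.X ^ (n - j)) * qbinom n j := by
  rcases le_or_gt (j + 1) n with h | h
  · rw [qbinom_of_le h, qbinom_of_le (by omega : j ≤ n), qfac_succ j,
      show n - j = (n - (j + 1)) + 1 by omega, qfac_succ (n - (j + 1))]
    have h1 := qfac_ne_zero j
    have h2 := qfac_ne_zero (n - (j + 1))
    have h3 : (1 : RatFunc ℚ) - RatFunc.X ^ (j + 1) ≠ 0 :=
      one_sub_X_pow_ne_zero (Nat.succ_ne_zero _)
    have h4 : (1 : RatFunc ℚ) - RatFunc.X ^ (n - (j + 1) + 1) ≠ 0 :=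
      one_sub_X_pow_ne_zero (Nat.succ_ne_zero _)
    field_simp
  · rcases eq_or_lt_of_le (Nat.succ_le_of_lt h) with h' | h'
    · rw [qbinom_of_lt h, show n - j = 0 by omega]
      simp
    · rw [qbinom_of_lt h, qbinom_of_lt (by omega : n < j)]
      simp


/-- the exponent in the summand -/
def ee (r s i : ℕ) : ℕ :=
  i * (i - 1) / 2 + (r - i) * (r - i - 1) / 2 + (r + s + i) * (r + s + i - 1) / 2

/-- the summand of the Lassalle–Schlosser sum -/
def trm (k r s i : ℕ) : RatFunc ℚ :=
  (-1 : RatFunc ℚ) ^ i * RatFunc.X ^ (ee r s i)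
    * (if i + s = 0 then 1
        else (1 - RatFunc.X ^ (2 * i + s)) / (1 - RatFunc.X ^ (i + s)))
    * qbinom (i + s) s * qbinom k (r - i) * qbinom k (r + s + i)

/-- the WZ certificate -/
def Gg (k r s i : ℕ) : RatFunc ℚ :=
  -((-1 : RatFunc ℚ) ^ i * RatFunc.X ^ (ee r s i - i + (k - r - s))
    * (1 - RatFunc.X ^ i) * (1 - RatFunc.X ^ (r + s + i)) * (1 - RatFunc.X ^ (r + 1 - i))
    * qbinom (i + s) s * qbinom k (r + 1 - i) * qbinom k (r + s + i)
    / ((1 - RatFunc.X ^ k) * (1 - RatFunc.X ^ (i + s))))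

lemma tri (n : ℕ) : (n + 1) * (n + 1 - 1) / 2 = n * (n - 1) / 2 + n := by
  have h : (n + 1) * (n + 1 - 1) = n * (n - 1) + n * 2 := by
    cases n with
    | zero => rfl
    | succ m => simp [Nat.succ_sub_one]; ring
  rw [h, Nat.add_mul_div_right _ _ (by norm_num : 0 < 2)]

lemma e_ge {r s i : ℕ} (hi : i ≤ r) : i ≤ ee r s i := by
  rcases Nat.eq_zero_or_pos i with h0 | h0
  · omega
  · have h1 : 2 * i ≤ (r + s + i) * (r + s + i - 1) := by
      calc 2 * i ≤ (r + s + i) * 1 := by omega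
      _ ≤ (r + s + i) * (r + s + i - 1) := by
          apply Nat.mul_le_mul_left
          omega
    have h2 : i ≤ (r + s + i) * (r + s + i - 1) / 2 := by omega
    unfold ee
    omega

lemma e_succ {r s i : ℕ} (hi : i < r) :
    ee r s (i + 1) = ee r s i + (3 * i + 1 + s) := by
  obtain ⟨j, rfl⟩ : ∃ j, r = i + 1 + j := ⟨r - i - 1, by omega⟩
  unfold ee
  rw [show i + 1 + j - (i + 1) = j by omega, show i + 1 + j - i = j + 1 by omega,
    show i + 1 + j + s + (i + 1) = (i + 1 + j + s + i) + 1 by omega,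
    tri i, tri j, tri (i + 1 + j + s + i)]
  omega

lemma Gg_zero (k r s : ℕ) : Gg k r s 0 = 0 := by
  simp [Gg]

lemma Gg_top (k r s : ℕ) : Gg k r s (r + 1) = 0 := by
  have : r + 1 - (r + 1) = 0 := by omega
  simp [Gg, this]

lemma G_eval (k r s i : ℕ) (hi : i ≤ r) (hk : r + s + 1 ≤ k) :
    (1 - RatFunc.X ^ k) * Gg k r s i
      = -((-1 : RatFunc ℚ) ^ i * RatFunc.X ^ (ee r s i - i + (k - r - s))
          * (1 - RatFunc.X ^ i) * (1 - RatFunc.X ^ (r + s + i))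
          * (1 - RatFunc.X ^ (k - r + i))
          * qbinom (i + s) s * qbinom k (r - i) * qbinom k (r + s + i)
          / (1 - RatFunc.X ^ (i + s))) := by
  have hB := lemB k (r - i)
  rw [show r - i + 1 = r + 1 - i by omega, show k - (r - i) = k - r + i by omega] at hB
  have hk0 : (1 : RatFunc ℚ) - RatFunc.X ^ k ≠ 0 :=
    one_sub_X_pow_ne_zero (by omega)
  unfold Gg
  rcases eq_or_ne ((1 : RatFunc ℚ) - RatFunc.X ^ (i + s)) 0 with hs | hs
  · rw [hs]
    simp
  · field_simp
    linear_combination (-(RatFunc.X ^ (ee r s i - i + (k - r - s))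
      * (1 - RatFunc.X ^ i) * (1 - RatFunc.X ^ (r + s + i)) * qbinom (i + s) s
      * qbinom k (r + s + i))) * hB




set_option maxHeartbeats 1000000 in
lemma G_succ (k r s i : ℕ) (hi : i ≤ r) (hk : r + s + 1 ≤ k) :
    (1 - RatFunc.X ^ k) * Gg k r s (i + 1)
      = (-1 : RatFunc ℚ) ^ i * RatFunc.X ^ ((ee r s i - i + (k - r - s)) + (3 * i + s))
          * (1 - RatFunc.X ^ (r - i)) * (1 - RatFunc.X ^ (k - r - s - i))
          * qbinom (i + s) s * qbinom k (r - i) * qbinom k (r + s + i) := by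
  rcases eq_or_lt_of_le hi with rfl | hlt
  · rw [Gg_top, show i - i = 0 by omega]
    simp
  · have h1 := e_succ (r := r) (s := s) hlt
    have h2 := e_ge (r := r) (s := s) hi
    have hE : ee r s (i + 1) - (i + 1) + (k - r - s)
        = (ee r s i - i + (k - r - s)) + (3 * i + s) := by
      rw [h1]; omega
    have hi1 : (1 : RatFunc ℚ) - RatFunc.X ^ (i + 1) ≠ 0 :=
      one_sub_X_pow_ne_zero (by omega)
    have hrsi : (1 : RatFunc ℚ) - RatFunc.X ^ (r + s + i + 1) ≠ 0 :=
      one_sub_X_pow_ne_zero (by omega)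
    have hA : qbinom (i + 1 + s) s
        = (1 - RatFunc.X ^ (i + 1 + s)) * qbinom (i + s) s / (1 - RatFunc.X ^ (i + 1)) := by
      have h := lemA (i + s) s
      rw [show i + s + 1 - s = i + 1 by omega, show i + s + 1 = i + 1 + s by omega] at h
      rw [eq_div_iff hi1]
      linear_combination -h
    have hB : qbinom k (r + s + i + 1)
        = (1 - RatFunc.X ^ (k - r - s - i)) * qbinom k (r + s + i)
            / (1 - RatFunc.X ^ (r + s + i + 1)) := by
      have h := lemB k (r + s + i)
      rw [show k - (r + s + i) = k - r - s - i by omega] at h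
      rw [eq_div_iff hrsi]
      linear_combination h
    have hk0 : (1 : RatFunc ℚ) - RatFunc.X ^ k ≠ 0 := one_sub_X_pow_ne_zero (by omega)
    have his : (1 : RatFunc ℚ) - RatFunc.X ^ (i + 1 + s) ≠ 0 :=
      one_sub_X_pow_ne_zero (by omega)
    unfold Gg
    rw [show r + 1 - (i + 1) = r - i by omega, hE,
      show r + s + (i + 1) = r + s + i + 1 by omega, hA, hB]
    field_simp [hi1, hrsi, hk0, his]
    ring




set_option maxHeartbeats 4000000 in
lemma tel (k r s i : ℕ) (hi : i ≤ r) (hk : r + s + 1 ≤ k) :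
    (1 - RatFunc.X ^ k) * ((1 - RatFunc.X ^ (k - r - s)) * trm k r s i)
      - (1 - RatFunc.X ^ k) ^ 2 * trm (k - 1) r s i
    = (1 - RatFunc.X ^ k) * Gg k r s (i + 1) - (1 - RatFunc.X ^ k) * Gg k r s i := by
  rw [G_succ k r s i hi hk, G_eval k r s i hi hk]
  by_cases hbig : k < r + s + i
  · unfold trm
    rw [qbinom_of_lt hbig, qbinom_of_lt (show k - 1 < r + s + i by omega)]
    ring
  · push_neg at hbig
    have hk0 : (1 : RatFunc ℚ) - RatFunc.X ^ k ≠ 0 := one_sub_X_pow_ne_zero (by omega)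
    have hA1 : qbinom (k - 1) (r - i)
        = (1 - RatFunc.X ^ (k - r + i)) * qbinom k (r - i) / (1 - RatFunc.X ^ k) := by
      have h := lemA (k - 1) (r - i)
      rw [show k - 1 + 1 = k by omega, show k - (r - i) = k - r + i by omega] at h
      rw [eq_div_iff hk0]
      linear_combination h
    have hA2 : qbinom (k - 1) (r + s + i)
        = (1 - RatFunc.X ^ (k - r - s - i)) * qbinom k (r + s + i) / (1 - RatFunc.X ^ k) := by
      have h := lemA (k - 1) (r + s + i)
      rw [show k - 1 + 1 = k by omega, show k - (r + s + i) = k - r - s - i by omega] at h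
      rw [eq_div_iff hk0]
      linear_combination h
    by_cases hs0 : i + s = 0
    · obtain ⟨rfl, rfl⟩ : i = 0 ∧ s = 0 := by omega
      obtain ⟨m, rfl⟩ : ∃ m, k = r + 1 + m := ⟨k - r - 1, by omega⟩
      unfold trm
      simp only [Nat.sub_zero, Nat.add_zero, Nat.zero_add, pow_zero, sub_self, if_true,
        mul_zero, zero_mul, zero_div, neg_zero, sub_zero, if_pos, mul_one, one_mul] at hA1 ⊢
      rw [hA1]
      simp only [show r + 1 + m - r = m + 1 by omega, show r + 1 + m - 1 = r + m by omega,
        show r + 1 + m - r - 0 - 0 = m + 1 by omega]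
      field_simp
      ring
    · unfold trm
      rw [if_neg hs0, hA1, hA2]
      have his : (1 : RatFunc ℚ) - RatFunc.X ^ (i + s) ≠ 0 := one_sub_X_pow_ne_zero hs0
      have hge := e_ge (r := r) (s := s) hi
      obtain ⟨j, rfl⟩ : ∃ j, r = i + j := ⟨r - i, by omega⟩
      obtain ⟨m, rfl⟩ : ∃ m, k = i + j + s + i + m := ⟨k - (i + j + s + i), by omega⟩
      obtain ⟨E1, hE1⟩ : ∃ E1, ee (i + j) s i = E1 + i := ⟨ee (i + j) s i - i, by omega⟩
      rw [hE1]
      simp only [Nat.add_sub_cancel, Nat.add_sub_cancel_left,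
        show i + j + s + i + m - (i + j) - s = i + m by omega,
        show i + j - i = j by omega,
        show i + j + s + i + m - (i + j) + i = s + i + m + i by omega,
        show i + j + s + i + m - (i + j) - s - i = m by omega]
      field_simp
      ring




noncomputable def Ssum (k r s : ℕ) : RatFunc ℚ := ∑ i ∈ Finset.range (r + 1), trm k r s i

noncomputable def Rhs (k r s : ℕ) : RatFunc ℚ :=
  RatFunc.X ^ (r * (r - 1) / 2 + (r + s) * (r + s - 1) / 2)
    * qfac k * qfacInv ((k : ℤ) - r - s) * qfacInv (r : ℤ) * qfacInv (s : ℤ)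

lemma qbinom_self (m : ℕ) : qbinom m m = 1 := by
  rw [qbinom_of_le le_rfl, Nat.sub_self, qfac_zero, mul_one, div_self (qfac_ne_zero m)]

lemma qfacInv_natCast (n : ℕ) : qfacInv (n : ℤ) = (qfac n)⁻¹ := by
  rw [qfacInv, if_neg (by omega), Int.toNat_natCast]

lemma sum_rec (k r s : ℕ) (hk : r + s + 1 ≤ k) :
    (1 - RatFunc.X ^ (k - r - s)) * Ssum k r s = (1 - RatFunc.X ^ k) * Ssum (k - 1) r s := by
  have hk0 : (1 : RatFunc ℚ) - RatFunc.X ^ k ≠ 0 := one_sub_X_pow_ne_zero (by omega)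
  have h1 : ∑ i ∈ Finset.range (r + 1),
      ((1 - RatFunc.X ^ k) * ((1 - RatFunc.X ^ (k - r - s)) * trm k r s i)
        - (1 - RatFunc.X ^ k) ^ 2 * trm (k - 1) r s i)
      = ∑ i ∈ Finset.range (r + 1),
        ((1 - RatFunc.X ^ k) * Gg k r s (i + 1) - (1 - RatFunc.X ^ k) * Gg k r s i) :=
    Finset.sum_congr rfl fun i hi =>
      tel k r s i (by have := Finset.mem_range.1 hi; omega) hk
  rw [Finset.sum_range_sub (f := fun i => (1 - RatFunc.X ^ k) * Gg k r s i)] at h1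
  rw [Gg_top, Gg_zero, mul_zero, sub_self] at h1
  rw [Finset.sum_sub_distrib, ← Finset.mul_sum, ← Finset.mul_sum, ← Finset.mul_sum] at h1
  have h2 : (1 - RatFunc.X ^ k) * ((1 - RatFunc.X ^ (k - r - s)) * Ssum k r s)
      = (1 - RatFunc.X ^ k) * ((1 - RatFunc.X ^ k) * Ssum (k - 1) r s) := by
    unfold Ssum
    linear_combination h1
  exact mul_left_cancel₀ hk0 h2

lemma rhs_rec (k r s : ℕ) (hk : r + s ≤ k) :
    (1 - RatFunc.X ^ (k + 1 - r - s)) * Rhs (k + 1) r s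
      = (1 - RatFunc.X ^ (k + 1)) * Rhs k r s := by
  unfold Rhs
  have h1 : qfacInv (((k + 1 : ℕ) : ℤ) - r - s)
      = (qfac (k - r - s) * (1 - RatFunc.X ^ (k + 1 - r - s)))⁻¹ := by
    rw [qfacInv, if_neg (by omega), show (((k + 1 : ℕ) : ℤ) - r - s).toNat
      = (k - r - s) + 1 by omega, qfac_succ, show k - r - s + 1 = k + 1 - r - s by omega]
  have h2 : qfacInv ((k : ℤ) - r - s) = (qfac (k - r - s))⁻¹ := by
    rw [qfacInv, if_neg (by omega), show ((k : ℤ) - r - s).toNat = k - r - s by omega]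
  rw [h1, h2, qfac_succ]
  have n1 := qfac_ne_zero (k - r - s)
  have n2 : (1 : RatFunc ℚ) - RatFunc.X ^ (k + 1 - r - s) ≠ 0 :=
    one_sub_X_pow_ne_zero (by omega)
  have n3 := qfac_ne_zero k
  rw [mul_inv]
  field_simp

lemma base_lt (k r s : ℕ) (hk : k < r + s) : Ssum k r s = Rhs k r s := by
  have h1 : Ssum k r s = 0 := by
    apply Finset.sum_eq_zero
    intro i hi
    unfold trm
    rw [qbinom_of_lt (show k < r + s + i by omega), mul_zero]
  have h2 : qfacInv ((k : ℤ) - r - s) = 0 := by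
    rw [qfacInv, if_pos (by omega)]
  rw [h1, Rhs, h2, mul_zero, zero_mul, zero_mul]

lemma base_eq (r s : ℕ) : Ssum (r + s) r s = Rhs (r + s) r s := by
  have h1 : Ssum (r + s) r s = trm (r + s) r s 0 := by
    apply Finset.sum_eq_single_of_mem 0 (Finset.mem_range.2 (by omega))
    intro i _ hi0
    unfold trm
    rw [qbinom_of_lt (show r + s < r + s + i by omega), mul_zero]
  have hd : (if 0 + s = 0 then (1 : RatFunc ℚ)
      else (1 - RatFunc.X ^ (2 * 0 + s)) / (1 - RatFunc.X ^ (0 + s))) = 1 := by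
    rcases Nat.eq_zero_or_pos s with rfl | hs
    · simp
    · rw [if_neg (by omega)]
      simp only [Nat.zero_add, Nat.mul_zero]
      exact div_self (one_sub_X_pow_ne_zero (by omega))
  have hee : ee r s 0 = r * (r - 1) / 2 + (r + s) * (r + s - 1) / 2 := by
    unfold ee
    simp
  rw [h1]
  unfold trm
  rw [hd, hee]
  simp only [Nat.zero_add, Nat.add_zero, Nat.sub_zero, pow_zero, one_mul, mul_one]
  rw [qbinom_self (r + s), qbinom_self s, mul_one,
    qbinom_of_le (show r ≤ r + s by omega), Nat.add_sub_cancel_left]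
  unfold Rhs
  rw [show ((r + s : ℕ) : ℤ) - r - s = 0 by omega]
  rw [show qfacInv 0 = 1 by rw [qfacInv, if_neg (by omega)]; simp [qfac_zero]]
  rw [qfacInv_natCast, qfacInv_natCast]
  have n1 := qfac_ne_zero r
  have n2 := qfac_ne_zero s
  field_simp

lemma main (k r s : ℕ) : Ssum k r s = Rhs k r s := by
  rcases lt_or_ge k (r + s) with h | h
  · exact base_lt k r s h
  · induction k, h using Nat.le_induction with
    | base => exact base_eq r s
    | succ n hn ih =>
        have hrec := sum_rec (n + 1) r s (by omega)
        rw [show n + 1 - 1 = n from rfl, ih] at hrec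
        have hZ : (1 : RatFunc ℚ) - RatFunc.X ^ (n + 1 - r - s) ≠ 0 :=
          one_sub_X_pow_ne_zero (by omega)
        apply mul_left_cancel₀ hZ
        rw [hrec, rhs_rec n r s hn]




end LSAux

/-- The principal specialisation of the Lassalle–Schlosser formula for the
Hall–Littlewood polynomial `P_{(2^r,1^s)}(1,q,…,q^{k-1};q)`, summed by a
very-well-poised ₆φ₅ summation:
`Σ_{i=0}^{r} (−1)^i q^{i(i−1)/2+(r−i)(r−i−1)/2+(r+s+i)(r+s+i−1)/2} dᵢ
  [i+s choose s]_q [k choose r−i]_q [k choose r+s+i]_q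
 = q^{r(r−1)/2+(r+s)(r+s−1)/2} (q;q)_k/((q;q)_{k−r−s}(q;q)_r(q;q)_s)`,
where `dᵢ = (1−q^{2i+s})/(1−q^{i+s})` for `i+s > 0` and `d₀ = 1` when `s = 0`. -/
theorem lassalle_schlosser_principal_specialisation (k r s : ℕ) :
    (∑ i ∈ Finset.range (r + 1),
      (-1 : RatFunc ℚ) ^ i
        * RatFunc.X ^ (i * (i - 1) / 2 + (r - i) * (r - i - 1) / 2
            + (r + s + i) * (r + s + i - 1) / 2)
        * (if i + s = 0 then 1
            else (1 - RatFunc.X ^ (2 * i + s)) / (1 - RatFunc.X ^ (i + s)))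
        * qbinom (i + s) s * qbinom k (r - i) * qbinom k (r + s + i)) =
    RatFunc.X ^ (r * (r - 1) / 2 + (r + s) * (r + s - 1) / 2)
      * qfac k * qfacInv ((k : ℤ) - r - s) * qfacInv (r : ℤ) * qfacInv (s : ℤ) := by
  exact LSAux.main k r s
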